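/- Tweedie's formula: in the normal means model with observation y ~ N(b, σ²) and prior b ~ f, the posterior mean satisfies E[b | y] = y + σ²·(d/dy) log p(y), where p(y) = ∫ N(y; b, σ²) f(b) db is the marginal density. -/

import Mathlib

set_option maxHeartbeats 1000000

open MeasureTheory Real

/-- Gaussian density with mean `μ` and variance `v`. -/
noncomputable def gauss (μ v x : ℝ) : ℝ :=
  (Real.sqrt (2 * Real.pi * v))⁻¹ * Real.exp (-(x - μ)^2 / (2 * v))

/-- Tweedie's formula: in the normal means model `y ~ N(b, σ²)`
with prior density `f`, the posterior mean satisfies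
`E[b | y] = y + σ²·(d/dy) log p(y)` where `p(y) = ∫ N(y; b, σ²) f(b) db` is the
marginal density. -/
theorem stmt_2 (σ2 : ℝ) (hσ2 : 0 < σ2) (f : ℝ → ℝ)
    (hf_nonneg : ∀ b, 0 ≤ f b) (hf_int : ∫ b : ℝ, f b = 1)
    (p : ℝ → ℝ) (hp : ∀ y, p y = ∫ b : ℝ, gauss b σ2 y * f b)
    (y : ℝ) (hpos : 0 < p y)
    (hnum : Integrable fun b : ℝ => b * (gauss b σ2 y * f b))
    (hdiff : DifferentiableAt ℝ p y) :
    (∫ b : ℝ, b * (gauss b σ2 y * f b)) / p y =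
      y + σ2 * deriv (fun y' => Real.log (p y')) y := by
  set c : ℝ → ℝ := fun y' => (Real.sqrt (2*Real.pi*σ2))⁻¹ * Real.exp (-(y'^2)/(2*σ2)) with hc_def
  set g : ℝ → ℝ := fun b => Real.exp (-(b^2)/(2*σ2)) * f b with hg_def
  have hs : 0 < Real.sqrt (2*Real.pi*σ2) :=
    Real.sqrt_pos.mpr (by positivity)
  have hc_pos : ∀ y', 0 < c y' := fun y' => by positivity
  -- key factorization
  have key : ∀ y' b : ℝ, gauss b σ2 y' * f b = c y' * (Real.exp ((y'/σ2)*b) * g b) := by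
    intro y' b
    unfold gauss
    have h : -(y' - b)^2 / (2*σ2) = -(y'^2)/(2*σ2) + ((y'/σ2)*b + -(b^2)/(2*σ2)) := by
      field_simp; ring
    simp only [hc_def, hg_def]
    rw [h, Real.exp_add, Real.exp_add]; ring
  -- measurability of g
  have hf_i : Integrable f := by
    by_contra h
    rw [MeasureTheory.integral_undef h] at hf_int
    exact one_ne_zero hf_int.symm
  have hg_meas : AEStronglyMeasurable g (volume : Measure ℝ) :=
    (Continuous.aestronglyMeasurable (by continuity)).mul hf_i.aestronglyMeasurable
  have hg_nonneg : ∀ b, 0 ≤ g b := fun b => mul_nonneg (Real.exp_pos _).le (hf_nonneg b)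
  have hFmeas : ∀ t : ℝ,
      AEStronglyMeasurable (fun b => Real.exp (t*b) * g b) (volume : Measure ℝ) :=
    fun t => (Continuous.aestronglyMeasurable (by continuity)).mul hg_meas
  -- integrability from nonvanishing of p
  have hint : ∀ y', p y' ≠ 0 → Integrable (fun b => Real.exp ((y'/σ2)*b) * g b) := by
    intro y' hne
    have h1 : Integrable (fun b => gauss b σ2 y' * f b) := by
      by_contra h
      rw [hp y', MeasureTheory.integral_undef h] at hne
      exact hne rfl
    have heq : (fun b => Real.exp ((y'/σ2)*b) * g b)
        = fun b => (c y')⁻¹ * (gauss b σ2 y' * f b) := by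
      funext b; rw [key y' b]
      field_simp
      rw [mul_div_assoc, div_self (hc_pos y').ne', mul_one]
    rw [heq]
    exact h1.const_mul _
  -- nonvanishing of p nearby
  have hev : ∀ᶠ y' in nhds y, p y' ≠ 0 :=
    hdiff.continuousAt.eventually_ne (ne_of_gt hpos)
  obtain ⟨ε, εpos, hball⟩ := Metric.eventually_nhds_iff.mp hev
  set t1 : ℝ := (y - ε/2)/σ2 with ht1
  set t2 : ℝ := (y + ε/2)/σ2 with ht2
  have ht1lt : t1 ≤ y/σ2 := ((div_lt_div_iff_of_pos_right hσ2).mpr (by linarith)).le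
  have ht2gt : y/σ2 ≤ t2 := ((div_lt_div_iff_of_pos_right hσ2).mpr (by linarith)).le
  have hint1 : Integrable (fun b => Real.exp (t1*b) * g b) := by
    apply hint
    apply hball
    rw [Real.dist_eq, show y - ε/2 - y = -(ε/2) by ring, abs_neg, abs_of_pos (by linarith)]
    linarith
  have hint2 : Integrable (fun b => Real.exp (t2*b) * g b) := by
    apply hint
    apply hball
    rw [Real.dist_eq, show y + ε/2 - y = ε/2 by ring, abs_of_pos (by linarith)]
    linarith
  -- integrability for all t in [t1, t2]
  have hIcc : ∀ t, t1 ≤ t → t ≤ t2 → Integrable (fun b => Real.exp (t*b) * g b) := by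
    intro t h1 h2
    apply (hint1.add hint2).mono (hFmeas t)
    filter_upwards with b
    simp only [Pi.add_apply]
    rw [Real.norm_eq_abs, Real.norm_eq_abs,
      abs_of_nonneg (mul_nonneg (Real.exp_pos _).le (hg_nonneg b)),
      abs_of_nonneg (by have := hg_nonneg b; positivity)]
    rcases le_total 0 b with hb | hb
    · have h3 : Real.exp (t*b) ≤ Real.exp (t2*b) :=
        Real.exp_le_exp.mpr (mul_le_mul_of_nonneg_right h2 hb)
      nlinarith [Real.exp_pos (t1*b), hg_nonneg b,
        mul_le_mul_of_nonneg_right h3 (hg_nonneg b)]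
    · have h3 : Real.exp (t*b) ≤ Real.exp (t1*b) :=
        Real.exp_le_exp.mpr (mul_le_mul_of_nonpos_right h1 hb)
      nlinarith [Real.exp_pos (t2*b), hg_nonneg b,
        mul_le_mul_of_nonneg_right h3 (hg_nonneg b)]
  -- the radius δ
  set δ : ℝ := min (t2 - y/σ2) (y/σ2 - t1) / 2 with hδdef
  have hδpos : 0 < δ := by
    have l1 : t1 < y/σ2 := (div_lt_div_iff_of_pos_right hσ2).mpr (by linarith)
    have l2 : y/σ2 < t2 := (div_lt_div_iff_of_pos_right hσ2).mpr (by linarith)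
    have := lt_min (by linarith : (0:ℝ) < t2 - y/σ2) (by linarith : (0:ℝ) < y/σ2 - t1)
    linarith
  have hδa : y/σ2 + 2*δ ≤ t2 := by
    have := min_le_left (t2 - y/σ2) (y/σ2 - t1); rw [hδdef]; linarith
  have hδb : t1 ≤ y/σ2 - 2*δ := by
    have := min_le_right (t2 - y/σ2) (y/σ2 - t1); rw [hδdef]; linarith
  -- the dominating function
  set bound : ℝ → ℝ := fun b =>
    δ⁻¹ * (Real.exp ((y/σ2+2*δ)*b) * g b + Real.exp ((y/σ2-2*δ)*b) * g b) with hbound_def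
  have hbound_int : Integrable bound :=
    ((hIcc _ (by linarith) hδa).add (hIcc _ hδb (by linarith))).const_mul _
  have hbound_nonneg : ∀ b, 0 ≤ bound b := by
    intro b
    have := hg_nonneg b
    positivity
  -- pointwise derivative bound
  have hbd : ∀ t : ℝ, t ∈ Metric.ball (y/σ2) δ → ∀ b : ℝ,
      |b| * Real.exp (t*b) ≤ δ⁻¹ * (Real.exp ((y/σ2+2*δ)*b) + Real.exp ((y/σ2-2*δ)*b)) := by
    intro t ht b
    have h1 : t*b ≤ (y/σ2)*b + δ*|b| := by
      have e1 : (t - y/σ2)*b ≤ |t - y/σ2| * |b| := by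
        calc (t - y/σ2)*b ≤ |(t - y/σ2)*b| := le_abs_self _
          _ = |t - y/σ2| * |b| := abs_mul _ _
      have e2 : |t - y/σ2| ≤ δ := le_of_lt (by simpa [Real.dist_eq] using Metric.mem_ball.mp ht)
      nlinarith [abs_nonneg b]
    have h2 : |b| ≤ δ⁻¹ * Real.exp (δ*|b|) := by
      have h0 : δ*|b| ≤ Real.exp (δ*|b|) := by
        have := Real.add_one_le_exp (δ*|b|); linarith
      calc |b| = δ⁻¹ * (δ*|b|) := by field_simp
        _ ≤ δ⁻¹ * Real.exp (δ*|b|) :=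
          mul_le_mul_of_nonneg_left h0 (inv_nonneg.mpr hδpos.le)
    calc |b| * Real.exp (t*b)
        ≤ (δ⁻¹ * Real.exp (δ*|b|)) * Real.exp ((y/σ2)*b + δ*|b|) :=
          mul_le_mul h2 (Real.exp_le_exp.mpr h1) (Real.exp_pos _).le (by positivity)
      _ = δ⁻¹ * Real.exp ((y/σ2)*b + 2*δ*|b|) := by
          rw [mul_assoc, ← Real.exp_add,
            show δ*|b| + ((y/σ2)*b + δ*|b|) = (y/σ2)*b + 2*δ*|b| from by ring]
      _ ≤ δ⁻¹ * (Real.exp ((y/σ2+2*δ)*b) + Real.exp ((y/σ2-2*δ)*b)) := by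
          apply mul_le_mul_of_nonneg_left ?_ (inv_nonneg.mpr hδpos.le)
          rcases le_total 0 b with hb | hb
          · rw [abs_of_nonneg hb,
              show (y/σ2)*b + 2*δ*b = (y/σ2+2*δ)*b from by ring]
            nlinarith [Real.exp_pos ((y/σ2-2*δ)*b)]
          · rw [abs_of_nonpos hb,
              show (y/σ2)*b + 2*δ*(-b) = (y/σ2-2*δ)*b from by ring]
            nlinarith [Real.exp_pos ((y/σ2+2*δ)*b)]
  -- Lipschitz property
  have hlip : ∀ b : ℝ, LipschitzOnWith (Real.nnabs (bound b))
      (fun t => Real.exp (t*b) * g b) (Metric.ball (y/σ2) δ) := by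
    intro b
    apply (convex_ball (y/σ2) δ).lipschitzOnWith_of_nnnorm_hasDerivWithin_le
      (f' := fun t => Real.exp (t*b) * (1*b) * g b)
    · intro t ht
      exact (((hasDerivAt_id t).mul_const b).exp.mul_const (g b)).hasDerivWithinAt
    · intro t ht
      rw [← NNReal.coe_le_coe, coe_nnnorm, Real.coe_nnabs, Real.norm_eq_abs]
      have habs : |Real.exp (t*b) * (1*b) * g b| = |b| * Real.exp (t*b) * g b := by
        rw [abs_mul, abs_mul, abs_of_nonneg (Real.exp_pos (t*b)).le,
          abs_of_nonneg (hg_nonneg b), one_mul]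
        ring
      rw [habs, abs_of_nonneg (hbound_nonneg b)]
      calc |b| * Real.exp (t*b) * g b
          ≤ (δ⁻¹ * (Real.exp ((y/σ2+2*δ)*b) + Real.exp ((y/σ2-2*δ)*b))) * g b :=
            mul_le_mul_of_nonneg_right (hbd t ht b) (hg_nonneg b)
        _ = bound b := by rw [hbound_def]; ring
  -- differentiation under the integral
  obtain ⟨hD_int, hL_deriv⟩ :=
    hasDerivAt_integral_of_dominated_loc_of_lip (μ := (volume : Measure ℝ))
      (F := fun t b => Real.exp (t*b) * g b)
      (F' := fun b => b * (Real.exp ((y/σ2)*b) * g b)) (x₀ := y/σ2) (bound := bound)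
      (Metric.ball_mem_nhds _ hδpos) (Filter.Eventually.of_forall fun t => hFmeas t)
      (hIcc _ ht1lt ht2gt)
      (aestronglyMeasurable_id.mul (hFmeas (y/σ2)))
      (Filter.Eventually.of_forall hlip) hbound_int
      (Filter.Eventually.of_forall fun b => by
        have h := (((hasDerivAt_id (y/σ2)).mul_const b).exp).mul_const (g b)
        refine h.congr_deriv ?_
        simp only [id_eq]
        ring)
  set D : ℝ := ∫ b : ℝ, b * (Real.exp ((y/σ2)*b) * g b) with hD_def
  set L0 : ℝ := ∫ b : ℝ, Real.exp ((y/σ2)*b) * g b with hL0_def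
  -- rewrite p
  have hp_eq : p = fun y' => c y' * ∫ b : ℝ, Real.exp ((y'/σ2)*b) * g b := by
    funext y'
    rw [hp y']
    simp_rw [key y']
    exact MeasureTheory.integral_const_mul _ _
  -- derivative of c
  have hcder : HasDerivAt c ((Real.sqrt (2*Real.pi*σ2))⁻¹ *
      (Real.exp (-(y^2)/(2*σ2)) * (-(y/σ2)))) y := by
    have h1 : HasDerivAt (fun y' : ℝ => -(y'^2)/(2*σ2)) (-(y/σ2)) y := by
      have h := ((hasDerivAt_pow 2 y).neg).div_const (2*σ2)
      refine h.congr_deriv ?_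
      field_simp; ring
    exact h1.exp.const_mul _
  have hinner : HasDerivAt (fun y' : ℝ => y'/σ2) σ2⁻¹ y := by
    simpa using (hasDerivAt_id y).div_const σ2
  have hcomp : HasDerivAt (fun y' : ℝ => ∫ b : ℝ, Real.exp ((y'/σ2)*b) * g b)
      (D * σ2⁻¹) y := by have := HasDerivAt.comp y hL_deriv hinner; exact this
  have hpder : HasDerivAt p
      ((Real.sqrt (2*Real.pi*σ2))⁻¹ * (Real.exp (-(y^2)/(2*σ2)) * (-(y/σ2))) * L0
        + c y * (D * σ2⁻¹)) y := by
    rw [hp_eq]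
    exact hcder.mul hcomp
  have hlog := hpder.log (ne_of_gt hpos)
  rw [hlog.deriv]
  -- final algebra
  have hLHS : (∫ b : ℝ, b * (gauss b σ2 y * f b)) = c y * D := by
    have h : ∀ b : ℝ, b * (gauss b σ2 y * f b)
        = c y * (b * (Real.exp ((y/σ2)*b) * g b)) := by
      intro b; rw [key]; ring
    simp_rw [h]
    exact MeasureTheory.integral_const_mul _ _
  have hpy : p y = c y * L0 := by rw [hp_eq]
  have hL0 : L0 ≠ 0 := by
    intro h
    rw [hpy, h, mul_zero] at hpos
    exact lt_irrefl 0 hpos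
  have hcy : c y = (Real.sqrt (2*Real.pi*σ2))⁻¹ * Real.exp (-(y^2)/(2*σ2)) := rfl
  rw [hLHS, hpy, hcy]
  have hexp : Real.exp (-(y^2)/(2*σ2)) ≠ 0 := (Real.exp_pos _).ne'
  field_simp
  ring
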